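/- Let R be a covering ring of a set X and μ : R → K a finitely additive, bounded set function (‖A‖_μ := sup{|μ(B)| : B ∈ R, B ⊆ A} < ∞ for every A ∈ R). Then the following are equivalent: (a) for every shrinking family S ⊆ R with ⋂S = ∅, lim_{A∈S} μ(A) = 0; (b) for every shrinking family S ⊆ R with ⋂S = ∅, lim_{A∈S} ‖A‖_μ = 0. -/

import Mathlib

open Set ENNReal

namespace NonArch

variable {X Y : Type*} {K : Type*}

/-- A covering ring of subsets of `X`: a ring of subsets whose elements cover `X`. -/
structure IsCoveringRing (R : Set (Set X)) : Prop where
  union_mem : ∀ ⦃A B : Set X⦄, A ∈ R → B ∈ R → A ∪ B ∈ R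
  inter_mem : ∀ ⦃A B : Set X⦄, A ∈ R → B ∈ R → A ∩ B ∈ R
  diff_mem : ∀ ⦃A B : Set X⦄, A ∈ R → B ∈ R → A \ B ∈ R
  covers : ∀ x : X, ∃ A ∈ R, x ∈ A

/-- `S` is a shrinking subfamily of `R`. -/
def IsShrinking (R S : Set (Set X)) : Prop :=
  S ⊆ R ∧ ∀ ⦃A⦄, A ∈ S → ∀ ⦃B⦄, B ∈ S → ∃ C ∈ S, C ⊆ A ∩ B

/-- `lim_{A ∈ S} f A = 0` for a real-valued set function. -/
def TendstoZeroOn (S : Set (Set X)) (f : Set X → ℝ) : Prop :=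
  ∀ ε : ℝ, 0 < ε → ∃ B ∈ S, ∀ A ∈ S, A ⊆ B → |f A| ≤ ε

section Measure

variable [NormedField K]

/-- The `μ`-norm `‖A‖_μ := sup{|μ B| : B ∈ R, B ⊆ A}`, as an extended nonnegative real. -/
noncomputable def mnorm (R : Set (Set X)) (μ : Set X → K) (A : Set X) : ℝ≥0∞ :=
  ⨆ (B : Set X) (_ : B ∈ R ∧ B ⊆ A), (‖μ B‖₊ : ℝ≥0∞)

/-- `N_μ x := inf {‖U‖_μ : x ∈ U ∈ R}`. -/
noncomputable def Nmu (R : Set (Set X)) (μ : Set X → K) (x : X) : ℝ≥0∞ :=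
  ⨅ (U : Set X) (_ : U ∈ R ∧ x ∈ U), mnorm R μ U

/-- A `K`-valued measure on `(X, R)`: finitely additive, bounded and continuous with
respect to shrinking families with empty intersection. -/
structure IsMeasure (R : Set (Set X)) (μ : Set X → K) : Prop where
  additive : ∀ ⦃A⦄, A ∈ R → ∀ ⦃B⦄, B ∈ R → Disjoint A B → μ (A ∪ B) = μ A + μ B
  bounded : ∀ ⦃A⦄, A ∈ R → mnorm R μ A < ⊤
  shrink_cont : ∀ S : Set (Set X), IsShrinking R S → ⋂₀ S = ∅ →
    TendstoZeroOn S fun A => ‖μ A‖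

/-- A probability `K`-valued measure on `(X, R)`. -/
structure IsProbability (R : Set (Set X)) (μ : Set X → K) : Prop where
  toIsMeasure : IsMeasure R μ
  univ_mem : Set.univ ∈ R
  measure_univ : μ Set.univ = 1
  mnorm_univ : mnorm R μ Set.univ = 1

/-- An `R`-step function: a finite `K`-linear combination of characteristic functions
of members of `R`. -/
def IsStep (R : Set (Set X)) (f : X → K) : Prop :=
  ∃ (n : ℕ) (c : Fin n → K) (A : Fin n → Set X),
    (∀ i, A i ∈ R) ∧ ∀ x, f x = ∑ i, c i * (A i).indicator 1 x

/-- The norm `‖f‖_{N_μ} := sup_x ‖f x‖ N_μ(x)`. -/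
noncomputable def fnorm (R : Set (Set X)) (μ : Set X → K) (f : X → K) : ℝ≥0∞ :=
  ⨆ x : X, (‖f x‖₊ : ℝ≥0∞) * Nmu R μ x

/-- The completion `R_μ` of `R` relative to `μ`: those subsets whose characteristic
functions are `‖·‖_{N_μ}`-limits of `R`-step functions. -/
def completion (R : Set (Set X)) (μ : Set X → K) : Set (Set X) :=
  {A | ∀ ε : ℝ≥0∞, 0 < ε → ∃ f : X → K, IsStep R f ∧
    fnorm R μ (fun x => A.indicator 1 x - f x) ≤ ε}

end Measure

end NonArch

namespace NonArch

/-- for a finitely additive bounded set function `μ` on a covering ring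
`R`, continuity `lim_{A∈S} μ A = 0` on all shrinking families `S` with empty
intersection is equivalent to `lim_{A∈S} ‖A‖_μ = 0` on all such families. -/
theorem shrinking_continuity_iff_mnorm_continuity {X K : Type*}
    [NontriviallyNormedField K] [IsUltrametricDist K] [CompleteSpace K]
    (R : Set (Set X)) (hR : IsCoveringRing R) (μ : Set X → K)
    (hadd : ∀ ⦃A⦄, A ∈ R → ∀ ⦃B⦄, B ∈ R → Disjoint A B → μ (A ∪ B) = μ A + μ B)
    (hbdd : ∀ ⦃A⦄, A ∈ R → mnorm R μ A < ⊤) :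
    (∀ S : Set (Set X), IsShrinking R S → ⋂₀ S = ∅ →
      TendstoZeroOn S fun A => ‖μ A‖) ↔
    (∀ S : Set (Set X), IsShrinking R S → ⋂₀ S = ∅ →
      ∀ ε : ℝ≥0∞, 0 < ε → ∃ B ∈ S, ∀ A ∈ S, A ⊆ B → mnorm R μ A ≤ ε) := by
  constructor
  · intro ha S hS hempty ε hε
    obtain ⟨t, ht0, htε⟩ : ∃ t : ℝ, 0 < t ∧ ENNReal.ofReal t ≤ ε := by
      rcases eq_or_ne ε ⊤ with h | h
      · exact ⟨1, one_pos, by simp [h]⟩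
      · exact ⟨ε.toReal, ENNReal.toReal_pos hε.ne' h, by rw [ENNReal.ofReal_toReal h]⟩
    -- the sandwich family
    set T : Set (Set X) :=
      {C | C ∈ R ∧ (∃ A ∈ S, A ⊆ C) ∧ ∃ A' ∈ S, C ⊆ A'} with hT
    have hSsub : S ⊆ T := fun A hA => ⟨hS.1 hA, ⟨A, hA, subset_rfl⟩, ⟨A, hA, subset_rfl⟩⟩
    have hTshr : IsShrinking R T := by
      refine ⟨fun C hC => hC.1, ?_⟩
      rintro C₁ ⟨h1R, ⟨A₁, hA₁, hA₁C⟩, ⟨A₁', hA₁', hCA₁'⟩⟩ C₂ ⟨h2R, ⟨A₂, hA₂, hA₂C⟩, -⟩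
      obtain ⟨A₃, hA₃, hsub⟩ := hS.2 hA₁ hA₂
      refine ⟨C₁ ∩ C₂, ⟨hR.inter_mem h1R h2R,
        ⟨A₃, hA₃, subset_inter ((hsub.trans inter_subset_left).trans hA₁C)
          ((hsub.trans inter_subset_right).trans hA₂C)⟩,
        ⟨A₁', hA₁', inter_subset_left.trans hCA₁'⟩⟩, subset_rfl⟩
    have hTempty : ⋂₀ T = ∅ :=
      eq_empty_of_subset_empty ((sInter_subset_sInter hSsub).trans hempty.le)
    obtain ⟨B₀, hB₀T, hB₀⟩ := ha T hTshr hTempty t ht0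
    obtain ⟨-, ⟨A₀, hA₀S, hA₀B₀⟩, -⟩ := hB₀T
    have hB₀' : ∀ C ∈ T, C ⊆ B₀ → ‖μ C‖ ≤ t := by
      intro C hC hCB
      have := hB₀ C hC hCB
      rwa [abs_of_nonneg (norm_nonneg _)] at this
    refine ⟨A₀, hA₀S, fun A hAS hAA₀ => ?_⟩
    rw [mnorm]
    refine iSup_le fun C => iSup_le fun hC => ?_
    obtain ⟨hCR, hCA⟩ := hC
    suffices h : ‖μ C‖ ≤ t by
      calc (‖μ C‖₊ : ℝ≥0∞) = ENNReal.ofReal ‖μ C‖ := (ofReal_norm _).symm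
        _ ≤ ENNReal.ofReal t := ENNReal.ofReal_le_ofReal h
        _ ≤ ε := htε
    by_contra hbig
    push_neg at hbig
    have hAB₀ : A ⊆ B₀ := hAA₀.trans hA₀B₀
    have hCB₀ : C ⊆ B₀ := hCA.trans hAB₀
    -- Step 2: every A' ∈ S with A' ⊆ A satisfies t < ‖μ (A' ∩ C)‖
    have key : ∀ A' ∈ S, A' ⊆ A → t < ‖μ (A' ∩ C)‖ := by
      intro A' hA'S hA'A
      have hA'R : A' ∈ R := hS.1 hA'S
      have h1 : ‖μ (C ∪ A')‖ ≤ t := by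
        refine hB₀' _ ⟨hR.union_mem hCR hA'R, ⟨A', hA'S, subset_union_right⟩,
          ⟨A, hAS, union_subset hCA hA'A⟩⟩ (union_subset hCB₀ (hA'A.trans hAB₀))
      have hdiffR : A' \ C ∈ R := hR.diff_mem hA'R hCR
      have hsplit : μ (C ∪ A') = μ C + μ (A' \ C) := by
        rw [← union_diff_self]
        exact hadd hCR hdiffR disjoint_sdiff_self_right
      have h2 : t < ‖μ (A' \ C)‖ := by
        by_contra hle
        push_neg at hle
        have : ‖μ C‖ ≤ max ‖μ (C ∪ A')‖ ‖μ (A' \ C)‖ := by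
          have := IsUltrametricDist.norm_add_le_max (μ (C ∪ A')) (-μ (A' \ C))
          rw [norm_neg] at this
          calc ‖μ C‖ = ‖μ (C ∪ A') + -μ (A' \ C)‖ := by rw [hsplit]; ring_nf
            _ ≤ max ‖μ (C ∪ A')‖ ‖μ (A' \ C)‖ := this
        exact absurd (this.trans (max_le h1 hle)) (not_le.mpr hbig)
      have h3 : ‖μ A'‖ ≤ t :=
        hB₀' _ (hSsub hA'S) ((hA'A.trans hAA₀).trans hA₀B₀)
      have hsplit2 : μ A' = μ (A' \ C) + μ (A' ∩ C) := by
        rw [← hadd hdiffR (hR.inter_mem hA'R hCR)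
          (disjoint_sdiff_self_left.mono_right inter_subset_right), diff_union_inter]
      by_contra hle
      push_neg at hle
      have : ‖μ (A' \ C)‖ ≤ max ‖μ A'‖ ‖μ (A' ∩ C)‖ := by
        have := IsUltrametricDist.norm_add_le_max (μ A') (-μ (A' ∩ C))
        rw [norm_neg] at this
        calc ‖μ (A' \ C)‖ = ‖μ A' + -μ (A' ∩ C)‖ := by rw [hsplit2]; ring_nf
          _ ≤ max ‖μ A'‖ ‖μ (A' ∩ C)‖ := this
      exact absurd (this.trans (max_le h3 hle)) (not_le.mpr h2)
    -- Step 3: apply (a) to the family {A' ∩ C : A' ∈ S, A' ⊆ A}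
    set G : Set (Set X) := {M | ∃ A' ∈ S, A' ⊆ A ∧ M = A' ∩ C} with hG
    have hGshr : IsShrinking R G := by
      constructor
      · rintro M ⟨A', hA'S, -, rfl⟩
        exact hR.inter_mem (hS.1 hA'S) hCR
      · rintro M₁ ⟨A₁, hA₁S, hA₁A, rfl⟩ M₂ ⟨A₂, hA₂S, -, rfl⟩
        obtain ⟨A₃, hA₃S, hsub⟩ := hS.2 hA₁S hA₂S
        refine ⟨A₃ ∩ C, ⟨A₃, hA₃S, (hsub.trans inter_subset_left).trans hA₁A, rfl⟩, ?_⟩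
        exact subset_inter (inter_subset_inter_left _ (hsub.trans inter_subset_left))
          (inter_subset_inter_left _ (hsub.trans inter_subset_right))
    have hGempty : ⋂₀ G = ∅ := by
      rw [eq_empty_iff_forall_notMem]
      intro x hx
      have hxS : x ∉ ⋂₀ S := by rw [hempty]; exact notMem_empty x
      rw [mem_sInter] at hxS
      push_neg at hxS
      obtain ⟨Ax, hAxS, hxAx⟩ := hxS
      obtain ⟨A₃, hA₃S, hsub⟩ := hS.2 hAxS hAS
      have : x ∈ A₃ ∩ C := hx (A₃ ∩ C) ⟨A₃, hA₃S, hsub.trans inter_subset_right, rfl⟩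
      exact hxAx (hsub.trans inter_subset_left this.1)
    obtain ⟨M₀, hM₀G, hM₀⟩ := ha G hGshr hGempty t ht0
    obtain ⟨A₀', hA₀'S, hA₀'A, rfl⟩ := hM₀G
    obtain ⟨A'', hA''S, hA''⟩ := hS.2 hA₀'S hA₀'S
    have hA''A₀' : A'' ⊆ A₀' := hA''.trans inter_subset_left
    have hbig' := key A'' hA''S (hA''A₀'.trans hA₀'A)
    have hsmall := hM₀ (A'' ∩ C) ⟨A'', hA''S, hA''A₀'.trans hA₀'A, rfl⟩
      (inter_subset_inter_left _ hA''A₀')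
    rw [abs_of_nonneg (norm_nonneg _)] at hsmall
    exact absurd hsmall (not_le.mpr hbig')
  · intro hb S hS hempty ε hε
    obtain ⟨B, hBS, hB⟩ := hb S hS hempty (ENNReal.ofReal ε) (ENNReal.ofReal_pos.mpr hε)
    refine ⟨B, hBS, fun A hAS hAB => ?_⟩
    have h1 : (‖μ A‖₊ : ℝ≥0∞) ≤ mnorm R μ A := by
      rw [mnorm]
      exact le_iSup₂ (f := fun (B : Set X) (_ : B ∈ R ∧ B ⊆ A) => (‖μ B‖₊ : ℝ≥0∞)) A
        ⟨hS.1 hAS, subset_rfl⟩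
    have h2 : (‖μ A‖₊ : ℝ≥0∞) ≤ ENNReal.ofReal ε := h1.trans (hB A hAS hAB)
    rw [← enorm_eq_nnnorm, ← ofReal_norm, ENNReal.ofReal_le_ofReal_iff hε.le] at h2
    rwa [abs_of_nonneg (norm_nonneg _)]

end NonArch
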